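/- Let F = [[F1, F12], [F12ᵀ, F2]] ∈ ℝ^{(n1+m)×(n1+m)} be symmetric positive definite with F1 ∈ ℝ^{n1×n1}, F12 ∈ ℝ^{n1×m}, F2 ∈ ℝ^{m×m}. Let C1 ∈ ℝ^{c×n1}, ε > 0, δ ∈ ℝ^c, q ∈ ℝ^c with positive entries, and define γ_i = ε + δ_i² + (1/2) Σ_j |(C1 F1⁻¹ C1ᵀ)_{ij}| q_j / q_i, Γ = diag(γ). Let L_Γ ∈ ℝ^{c×c} satisfy L_Γᵀ L_Γ = 2Γ − C1 F1⁻¹ C1ᵀ, and let L_F ∈ ℝ^{m×m} be invertible with L_Fᵀ L_F = F2 − F12ᵀ F1⁻¹ F12. Let Y ∈ ℝ^{c×c}, Z ∈ ℝ^{m×c}, let (U, V) be the Cayley transform of (Y, Z), and set Ĉ2 = C1 F1⁻¹ F12 − L_Γᵀ Vᵀ L_F, Λ = Γ⁻¹, L = U L_Γ Γ⁻¹, X = Lᵀ L. Then the block matrix [[F1, F12, −C1ᵀ Λ], [F12ᵀ, F2, −Ĉ2ᵀ Λ], [−Λ C1, −Λ Ĉ2, 2Λ − X]] is positive semidefinite.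 -/

import Mathlib

open Matrix Finset

-- aux: top-left block of PosDef block matrix is PosDef
lemma posDef_block_inl {α β : Type*} [Fintype α] [Fintype β] [DecidableEq α] [DecidableEq β]
    {A : Matrix (α ⊕ β) (α ⊕ β) ℝ} (hA : A.PosDef) :
    (A.submatrix Sum.inl Sum.inl).PosDef := by
  refine Matrix.PosDef.of_dotProduct_mulVec_pos ?_ ?_
  · ext i j
    have := congrFun (congrFun hA.1 (Sum.inl i)) (Sum.inl j)
    simpa [conjTranspose_apply] using this
  · intro x hx
    have hne : (Sum.elim x (0 : β → ℝ)) ≠ 0 := by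
      intro h
      apply hx
      ext i
      exact congrFun h (Sum.inl i)
    have := hA.dotProduct_mulVec_pos hne
    simpa [mulVec, dotProduct, Fintype.sum_sum_type, submatrix, star_trivial] using this

lemma cayley_det {c m : ℕ} (Y : Matrix (Fin c) (Fin c) ℝ) (Z : Matrix (Fin m) (Fin c) ℝ)
    (M : Matrix (Fin c) (Fin c) ℝ) (hM : M = Y - Yᵀ + Zᵀ * Z) :
    IsUnit (1 + M).det := by
  rw [isUnit_iff_ne_zero]
  intro hdet
  obtain ⟨v, hv, hv0⟩ := (Matrix.exists_mulVec_eq_zero_iff).2 hdet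
  have h1 : v ⬝ᵥ ((1 + M) *ᵥ v) = 0 := by rw [hv0, dotProduct_zero]
  have hskew : v ⬝ᵥ ((Y - Yᵀ) *ᵥ v) = 0 := by
    rw [sub_mulVec, dotProduct_sub, dotProduct_mulVec v Yᵀ v, vecMul_transpose,
      dotProduct_comm, sub_self]
  have hZ : v ⬝ᵥ ((Zᵀ * Z) *ᵥ v) = (Z *ᵥ v) ⬝ᵥ (Z *ᵥ v) := by
    rw [← mulVec_mulVec, dotProduct_mulVec v Zᵀ, vecMul_transpose]
  have h2 : v ⬝ᵥ v + (Z *ᵥ v) ⬝ᵥ (Z *ᵥ v) = 0 := by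
    have := h1
    rw [add_mulVec, one_mulVec, dotProduct_add, hM, add_mulVec, dotProduct_add, hskew,
      zero_add, hZ] at this
    exact this
  have h3 : (0:ℝ) ≤ v ⬝ᵥ v := by
    simp only [dotProduct]
    exact Finset.sum_nonneg fun i _ => mul_self_nonneg _
  have h4 : (0:ℝ) ≤ (Z *ᵥ v) ⬝ᵥ (Z *ᵥ v) := by
    simp only [dotProduct]
    exact Finset.sum_nonneg fun i _ => mul_self_nonneg _
  exact hv (dotProduct_self_eq_zero.mp (by linarith))

lemma cayley_orth {c m : ℕ} (Y : Matrix (Fin c) (Fin c) ℝ) (Z : Matrix (Fin m) (Fin c) ℝ)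
    (M : Matrix (Fin c) (Fin c) ℝ) (hM : M = Y - Yᵀ + Zᵀ * Z)
    (hdet : IsUnit (1 + M).det)
    (U : Matrix (Fin c) (Fin c) ℝ) (hU : U = (1 + M)⁻¹ * (1 - M))
    (V : Matrix (Fin m) (Fin c) ℝ) (hV : V = (2 : ℝ) • (Z * (1 + M)⁻¹)) :
    Uᵀ * U + Vᵀ * V = 1 := by
  set B := (1 + M)⁻¹ with hB
  have hAi1 : (1 + M) * B = 1 := Matrix.mul_nonsing_inv _ hdet
  have hAi2 : B * (1 + M) = 1 := Matrix.nonsing_inv_mul _ hdet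
  -- commuting
  have hcomm : (1 + M) * (1 - M) = (1 - M) * (1 + M) := by noncomm_ring
  have hUc : U = (1 - M) * B := by
    rw [hU]
    calc B * (1 - M) = B * (1 - M) * ((1 + M) * B) := by rw [hAi1, mul_one]
    _ = B * ((1 - M) * (1 + M)) * B := by noncomm_ring
    _ = B * ((1 + M) * (1 - M)) * B := by rw [hcomm]
    _ = (B * (1 + M)) * ((1 - M) * B) := by noncomm_ring
    _ = (1 - M) * B := by rw [hAi2, one_mul]
  have hMM : M + Mᵀ = (2:ℝ) • (Zᵀ * Z) := by
    rw [hM]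
    simp only [transpose_add, transpose_sub, transpose_mul, transpose_transpose]
    rw [two_smul]
    abel
  have key : (1 - Mᵀ) * (1 - M) + (4:ℝ) • (Zᵀ * Z) = (1 + Mᵀ) * (1 + M) := by
    have h4 : (4:ℝ) • (Zᵀ * Z) = (2:ℝ) • ((2:ℝ) • (Zᵀ * Z)) := by
      rw [smul_smul]; norm_num
    rw [h4, ← hMM, sub_mul, one_mul, mul_sub, mul_one, add_mul, one_mul, mul_add, mul_one,
      two_smul]
    abel
  have hUT : Uᵀ = Bᵀ * (1 - Mᵀ) := by
    rw [hUc, transpose_mul, transpose_sub, transpose_one]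
  have hVV : Vᵀ * V = (4:ℝ) • (Bᵀ * (Zᵀ * Z) * B) := by
    rw [hV]
    simp only [transpose_smul, transpose_mul, Matrix.smul_mul, Matrix.mul_smul, smul_smul,
      Matrix.mul_assoc]
    norm_num
  have hUU : Uᵀ * U = Bᵀ * ((1 - Mᵀ) * (1 - M)) * B := by
    rw [hUT, hUc]
    noncomm_ring
  rw [hUU, hVV]
  have : Bᵀ * ((1 - Mᵀ) * (1 - M)) * B + (4:ℝ) • (Bᵀ * (Zᵀ * Z) * B)
      = Bᵀ * ((1 - Mᵀ) * (1 - M) + (4:ℝ) • (Zᵀ * Z)) * B := by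
    rw [Matrix.mul_add, Matrix.add_mul, mul_smul_comm, smul_mul_assoc]
  rw [this, key]
  have hBT : Bᵀ * (1 + Mᵀ) = 1 := by
    have := congrArg Matrix.transpose hAi1
    rw [transpose_mul, transpose_add, transpose_one] at this
    simpa using this
  calc Bᵀ * ((1 + Mᵀ) * (1 + M)) * B = (Bᵀ * (1 + Mᵀ)) * ((1 + M) * B) := by noncomm_ring
  _ = 1 := by rw [hBT, hAi1, one_mul]

/-- Parameterization of a 2-D convolutional layer
(Theorem 7 in the paper): with `Ĉ2 = C1 F1⁻¹ F12 − L_Γᵀ Vᵀ L_F`,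
`Λ = Γ⁻¹`, `L = U L_Γ Γ⁻¹`, `X = Lᵀ L`, the 3×3 block LMI certificate
`[[F1, F12, −C1ᵀ Λ], [F12ᵀ, F2, −Ĉ2ᵀ Λ], [−Λ C1, −Λ Ĉ2, 2Λ − X]]`
is positive semidefinite. -/
theorem conv2d_parameterization_satisfies_LMI
    (n1 m c : ℕ)
    (F1 : Matrix (Fin n1) (Fin n1) ℝ) (F12 : Matrix (Fin n1) (Fin m) ℝ)
    (F2 : Matrix (Fin m) (Fin m) ℝ)
    (hF : (Matrix.fromBlocks F1 F12 F12ᵀ F2).PosDef)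
    (C1 : Matrix (Fin c) (Fin n1) ℝ) (ε : ℝ) (hε : 0 < ε)
    (δ q : Fin c → ℝ) (hq : ∀ i, 0 < q i)
    (γ : Fin c → ℝ)
    (hγ : ∀ i, γ i = ε + δ i ^ 2 +
      (1 / 2) * ∑ j, |(C1 * F1⁻¹ * C1ᵀ) i j| * q j / q i)
    (Γ : Matrix (Fin c) (Fin c) ℝ) (hΓ : Γ = Matrix.diagonal γ)
    (LΓ : Matrix (Fin c) (Fin c) ℝ)
    (hLΓ : LΓᵀ * LΓ = (2 : ℝ) • Γ - C1 * F1⁻¹ * C1ᵀ)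
    (LF : Matrix (Fin m) (Fin m) ℝ) (hLF : IsUnit LF)
    (hLFF : LFᵀ * LF = F2 - F12ᵀ * F1⁻¹ * F12)
    (Y : Matrix (Fin c) (Fin c) ℝ) (Z : Matrix (Fin m) (Fin c) ℝ)
    (M : Matrix (Fin c) (Fin c) ℝ) (hM : M = Y - Yᵀ + Zᵀ * Z)
    (U : Matrix (Fin c) (Fin c) ℝ) (hU : U = (1 + M)⁻¹ * (1 - M))
    (V : Matrix (Fin m) (Fin c) ℝ) (hV : V = (2 : ℝ) • (Z * (1 + M)⁻¹))
    (Ch2 : Matrix (Fin c) (Fin m) ℝ)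
    (hCh2 : Ch2 = C1 * F1⁻¹ * F12 - LΓᵀ * Vᵀ * LF)
    (Λ : Matrix (Fin c) (Fin c) ℝ) (hΛ : Λ = Γ⁻¹)
    (L : Matrix (Fin c) (Fin c) ℝ) (hL : L = U * LΓ * Γ⁻¹)
    (X : Matrix (Fin c) (Fin c) ℝ) (hX : X = Lᵀ * L) :
    (Matrix.fromBlocks (Matrix.fromBlocks F1 F12 F12ᵀ F2)
      (Matrix.fromRows (-(C1ᵀ * Λ)) (-(Ch2ᵀ * Λ)))
      (Matrix.fromCols (-(Λ * C1)) (-(Λ * Ch2)))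
      ((2 : ℝ) • Λ - X)).PosSemidef := by
  -- positivity of γ
  have hγpos : ∀ i, 0 < γ i := by
    intro i
    rw [hγ i]
    have hsum : 0 ≤ ∑ j, |(C1 * F1⁻¹ * C1ᵀ) i j| * q j / q i :=
      Finset.sum_nonneg fun j _ =>
        div_nonneg (mul_nonneg (abs_nonneg _) (hq j).le) (hq i).le
    nlinarith [sq_nonneg (δ i)]
  -- Γ and Λ facts
  have hΓdet : IsUnit Γ.det := by
    rw [hΓ, det_diagonal, isUnit_iff_ne_zero]
    exact Finset.prod_ne_zero_iff.mpr fun i _ => (hγpos i).ne'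
  have hΓT : Γᵀ = Γ := by rw [hΓ, diagonal_transpose]
  have hΛT : Λᵀ = Λ := by rw [hΛ, Matrix.transpose_nonsing_inv, hΓT]
  have hΛΓ : Λ * Γ = 1 := by rw [hΛ]; exact Matrix.nonsing_inv_mul Γ hΓdet
  have hΓΛ : Γ * Λ = 1 := by rw [hΛ]; exact Matrix.mul_nonsing_inv Γ hΓdet
  -- F1 facts
  have hF1 : F1.PosDef := by
    have h := posDef_block_inl hF
    have : (Matrix.fromBlocks F1 F12 F12ᵀ F2).submatrix Sum.inl Sum.inl = F1 := by
      ext i j; simp [Matrix.fromBlocks]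
    rwa [this] at h
  have hF1T : F1ᵀ = F1 := by
    rw [← conjTranspose_eq_transpose_of_trivial]; exact hF1.1
  set R1 := (open scoped MatrixOrder in CFC.sqrt F1) with hR1def
  have hR1mul : R1 * R1 = F1 := (open scoped MatrixOrder in CFC.sqrt_mul_sqrt_self F1 hF1.posSemidef.nonneg)
  have hR1T : R1ᵀ = R1 := by
    rw [← conjTranspose_eq_transpose_of_trivial]
    exact (open scoped MatrixOrder in (CFC.sqrt_nonneg F1).posSemidef.1)
  have hR1det : IsUnit R1.det := by
    rw [isUnit_iff_ne_zero]
    intro h0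
    have : F1.det = 0 := by rw [← hR1mul, det_mul, h0, mul_zero]
    exact absurd this (ne_of_gt hF1.det_pos)
  have hR1i1 : R1 * R1⁻¹ = 1 := Matrix.mul_nonsing_inv _ hR1det
  have hR1i2 : R1⁻¹ * R1 = 1 := Matrix.nonsing_inv_mul _ hR1det
  have hR1iT : R1⁻¹ᵀ = R1⁻¹ := by rw [Matrix.transpose_nonsing_inv, hR1T]
  have hF1inv : R1⁻¹ * R1⁻¹ = F1⁻¹ := by rw [← hR1mul, Matrix.mul_inv_rev]
  have hF1invT : F1⁻¹ᵀ = F1⁻¹ := by rw [Matrix.transpose_nonsing_inv, hF1T]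
  -- Cayley facts
  have hdet := cayley_det Y Z M hM
  have hUVsum := cayley_orth Y Z M hM hdet U hU V hV
  have hVV : Vᵀ * V = 1 - Uᵀ * U := eq_sub_of_add_eq' hUVsum
  have hCC : C1 * F1⁻¹ * C1ᵀ = (2:ℝ) • Γ - LΓᵀ * LΓ := by
    rw [hLΓ]; exact (sub_sub_cancel _ _).symm
  -- pointwise rewriting helpers
  have hR1i1' : ∀ {k : ℕ} (A : Matrix (Fin n1) (Fin k) ℝ), R1 * (R1⁻¹ * A) = A := fun A => by
    rw [← Matrix.mul_assoc, hR1i1, Matrix.one_mul]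
  have hF1inv' : ∀ {k : ℕ} (A : Matrix (Fin n1) (Fin k) ℝ), R1⁻¹ * (R1⁻¹ * A) = F1⁻¹ * A :=
    fun A => by rw [← Matrix.mul_assoc, hF1inv]
  have hVV' : ∀ (A : Matrix (Fin c) (Fin c) ℝ), Vᵀ * (V * A) = A - Uᵀ * (U * A) := fun A => by
    rw [← Matrix.mul_assoc, hVV, Matrix.sub_mul, Matrix.one_mul, Matrix.mul_assoc]
  have hCC' : ∀ (A : Matrix (Fin c) (Fin c) ℝ),
      C1 * (F1⁻¹ * (C1ᵀ * A)) = (2:ℝ) • (Γ * A) - LΓᵀ * (LΓ * A) := fun A => by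
    rw [← Matrix.mul_assoc, ← Matrix.mul_assoc, hCC, Matrix.sub_mul, Matrix.smul_mul,
      Matrix.mul_assoc]
  -- the square-root witness
  set P1 : Matrix (Fin n1) (Fin c) ℝ := -(R1⁻¹ * (C1ᵀ * Λ)) with hP1
  set P2 : Matrix (Fin m) (Fin c) ℝ := V * LΓ * Λ with hP2
  set R : Matrix (Fin n1 ⊕ Fin m) (Fin n1 ⊕ Fin m) ℝ :=
    Matrix.fromBlocks R1 (R1⁻¹ * F12) 0 LF with hR
  set W : Matrix ((Fin n1 ⊕ Fin m) ⊕ Fin c) ((Fin n1 ⊕ Fin m) ⊕ Fin c) ℝ :=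
    Matrix.fromBlocks R (Matrix.fromRows P1 P2) 0 0 with hW
  -- the four block identities
  have hA : Rᵀ * R = Matrix.fromBlocks F1 F12 F12ᵀ F2 := by
    rw [hR, fromBlocks_transpose, fromBlocks_multiply]
    simp only [transpose_zero, Matrix.zero_mul, Matrix.mul_zero, add_zero, zero_add]
    have b11 : R1ᵀ * R1 = F1 := by rw [hR1T, hR1mul]
    have b12 : R1ᵀ * (R1⁻¹ * F12) = F12 := by rw [hR1T, hR1i1']
    have b21 : (R1⁻¹ * F12)ᵀ * R1 = F12ᵀ := by
      rw [transpose_mul, hR1iT, Matrix.mul_assoc, hR1i2, Matrix.mul_one]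
    have b22 : (R1⁻¹ * F12)ᵀ * (R1⁻¹ * F12) + LFᵀ * LF = F2 := by
      rw [transpose_mul, hR1iT, hLFF, Matrix.mul_assoc, hF1inv']
      simp only [Matrix.mul_assoc]
      abel
    rw [b11, b12, b21, b22]
  have hB : Rᵀ * Matrix.fromRows P1 P2
      = Matrix.fromRows (-(C1ᵀ * Λ)) (-(Ch2ᵀ * Λ)) := by
    rw [hR, fromBlocks_transpose, fromBlocks_mul_fromRows]
    simp only [transpose_zero, Matrix.zero_mul, Matrix.mul_zero, add_zero, zero_add]
    have t1 : R1ᵀ * P1 = -(C1ᵀ * Λ) := by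
      simp only [hP1, Matrix.mul_neg, hR1T, hR1i1']
    have t2 : (R1⁻¹ * F12)ᵀ * P1 + LFᵀ * P2 = -(Ch2ᵀ * Λ) := by
      rw [hP1, hP2, hCh2]
      simp only [transpose_mul, transpose_sub, transpose_transpose, hR1iT, hF1invT, hΛT,
        Matrix.mul_neg, Matrix.neg_mul, Matrix.sub_mul, Matrix.mul_assoc, hF1inv']
      abel
    rw [t1, t2]
  have hC : (Matrix.fromRows P1 P2)ᵀ * R
      = Matrix.fromCols (-(Λ * C1)) (-(Λ * Ch2)) := by
    have := congrArg Matrix.transpose hB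
    rw [transpose_mul, transpose_transpose, transpose_fromRows] at this
    rw [transpose_fromRows, this, transpose_fromRows]
    simp only [transpose_neg, transpose_mul, transpose_transpose, hΛT]
  have hD : (Matrix.fromRows P1 P2)ᵀ * Matrix.fromRows P1 P2 = (2:ℝ) • Λ - X := by
    rw [transpose_fromRows, fromCols_mul_fromRows]
    have e1 : P1ᵀ * P1 = Λ * ((2:ℝ) • (Γ * Λ) - LΓᵀ * (LΓ * Λ)) := by
      rw [hP1]
      simp only [transpose_neg, transpose_mul, transpose_transpose, hR1iT, hΛT,
        Matrix.neg_mul, Matrix.mul_neg, neg_neg, Matrix.mul_assoc, hF1inv', hCC']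
    have e2 : P2ᵀ * P2 = Λ * (LΓᵀ * ((LΓ * Λ) - Uᵀ * (U * (LΓ * Λ)))) := by
      rw [hP2]
      simp only [transpose_mul, hΛT, Matrix.mul_assoc, hVV']
    have eX : X = Λ * (LΓᵀ * (Uᵀ * (U * (LΓ * Λ)))) := by
      rw [hX, hL, ← hΛ]
      simp only [transpose_mul, hΛT, Matrix.mul_assoc]
    rw [e1, e2, eX, hΓΛ]
    simp only [Matrix.mul_sub, Matrix.mul_smul, Matrix.mul_one, smul_smul]
    abel
  have hWW : Wᵀ * W = Matrix.fromBlocks (Matrix.fromBlocks F1 F12 F12ᵀ F2)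
      (Matrix.fromRows (-(C1ᵀ * Λ)) (-(Ch2ᵀ * Λ)))
      (Matrix.fromCols (-(Λ * C1)) (-(Λ * Ch2)))
      ((2 : ℝ) • Λ - X) := by
    rw [hW, fromBlocks_transpose, fromBlocks_multiply]
    simp only [transpose_zero, Matrix.zero_mul, Matrix.mul_zero, add_zero, zero_add]
    rw [hA, hB, hC, hD]
  rw [← hWW]
  have h := Matrix.posSemidef_conjTranspose_mul_self W
  rwa [conjTranspose_eq_transpose_of_trivial] at h
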